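/- Let G be a graph with edge connectivity λ and minimum degree δ, and let G' be obtained from G by contracting each part of a partition such that every non-trivial minimum cut of G is preserved (i.e., for every non-trivial minimum cut (C,V\C), each contracted part lies entirely in C or entirely in V\C). Let λ' be the edge connectivity of G'. Then min{λ', δ} = λ. -/
import Mathlib


open Finset

variable {V : Type*} [Fintype V] [DecidableEq V]

/-- Number of ordered adjacencies from `A` to `B`; for disjoint `A B` this is `|E(A,B)|`. -/
def eBtw (G : SimpleGraph V) [DecidableRel G.Adj] (A B : Finset V) : ℕ :=
  ∑ a ∈ A, (B.filter (G.Adj a)).card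

/-- `|E(v,S)|`: number of edges from `v` to `S`. -/
def eV (G : SimpleGraph V) [DecidableRel G.Adj] (v : V) (S : Finset V) : ℕ :=
  (S.filter (G.Adj v)).card

/-- Volume `vol_G(S)`. -/
def vol (G : SimpleGraph V) [DecidableRel G.Adj] (S : Finset V) : ℕ :=
  ∑ v ∈ S, G.degree v

/-- Value of the cut `(C, V \ C)`. -/
def cutVal (G : SimpleGraph V) [DecidableRel G.Adj] (C : Finset V) : ℕ :=
  eBtw G C Cᶜ

/-- `(C, V \ C)` is a minimum cut. -/
def IsMinCut (G : SimpleGraph V) [DecidableRel G.Adj] (C : Finset V) : Prop :=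
  C.Nonempty ∧ Cᶜ.Nonempty ∧
    ∀ D : Finset V, D.Nonempty → Dᶜ.Nonempty → cutVal G C ≤ cutVal G D

/-- `|E(A,A)|`: number of edges with both endpoints in `A`. -/
def inEdges (G : SimpleGraph V) [DecidableRel G.Adj] (A : Finset V) : ℕ :=
  (G.edgeFinset.filter (fun e => ∀ v ∈ e, v ∈ A)).card

lemma eBtw_comm (G : SimpleGraph V) [DecidableRel G.Adj] (A B : Finset V) :
    eBtw G A B = eBtw G B A := by
  unfold eBtw
  simp only [Finset.card_filter]
  rw [Finset.sum_comm]
  apply Finset.sum_congr rfl; intro b _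
  apply Finset.sum_congr rfl; intro a _
  simp [SimpleGraph.adj_comm]

lemma cutVal_compl (G : SimpleGraph V) [DecidableRel G.Adj] (C : Finset V) :
    cutVal G Cᶜ = cutVal G C := by
  unfold cutVal
  rw [compl_compl, eBtw_comm]

lemma cutVal_singleton (G : SimpleGraph V) [DecidableRel G.Adj] (v : V) :
    cutVal G {v} = G.degree v := by
  unfold cutVal eBtw
  rw [Finset.sum_singleton, ← SimpleGraph.card_neighborFinset_eq_degree]
  congr 1
  ext w
  simp only [Finset.mem_filter, Finset.mem_compl, Finset.mem_singleton,
    SimpleGraph.mem_neighborFinset]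
  exact ⟨fun h => h.2, fun h => ⟨h.ne', h⟩⟩

theorem stmt8 (G : SimpleGraph V) [DecidableRel G.Adj] (hG : G.Connected)
    (hV : 2 ≤ Fintype.card V)
    (P : Finpartition (Finset.univ : Finset V))
    (δ : ℕ) (hδ : δ = G.minDegree)
    (lam : ℕ)
    (hlam_lb : ∀ C : Finset V, C.Nonempty → Cᶜ.Nonempty → lam ≤ cutVal G C)
    (hlam_ach : ∃ C : Finset V, C.Nonempty ∧ Cᶜ.Nonempty ∧ cutVal G C = lam)
    (hpres : ∀ C : Finset V, IsMinCut G C → 2 ≤ C.card → 2 ≤ Cᶜ.card →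
      ∀ X ∈ P.parts, X ⊆ C ∨ X ⊆ Cᶜ)
    (lam' : ℕ)
    (hlam'_lb : ∀ S : Finset (Finset V), S ⊆ P.parts → (S.sup id).Nonempty →
      ((S.sup id)ᶜ).Nonempty → lam' ≤ cutVal G (S.sup id))
    (hlam'_ach : ∃ S : Finset (Finset V), S ⊆ P.parts ∧ (S.sup id).Nonempty ∧
      ((S.sup id)ᶜ).Nonempty ∧ cutVal G (S.sup id) = lam') :
    min lam' δ = lam := by
  obtain ⟨C, hC1, hC2, hCval⟩ := hlam_ach
  obtain ⟨S0, hS0sub, hS01, hS02, hS0val⟩ := hlam'_ach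
  have hlamle' : lam ≤ lam' := hS0val ▸ hlam_lb _ hS01 hS02
  have : Nonempty V := Fintype.card_pos_iff.mp (by omega)
  obtain ⟨v, hv⟩ := G.exists_minimal_degree_vertex
  have hcompl : ({v} : Finset V)ᶜ.Nonempty := by
    rw [← Finset.card_pos, Finset.card_compl, Finset.card_singleton]; omega
  have hlamδ : lam ≤ δ := by
    have := hlam_lb {v} (Finset.singleton_nonempty v) hcompl
    rwa [cutVal_singleton, ← hv, ← hδ] at this
  rcases eq_or_lt_of_le hlamδ with h | h
  · omega
  · -- lam < δ : show lam' ≤ lam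
    have key : ∀ D : Finset V, D.Nonempty → cutVal G D = lam → 2 ≤ D.card := by
      intro D hD hDval
      by_contra hlt
      push_neg at hlt
      have hpos := hD.card_pos
      have h1 : D.card = 1 := by omega
      obtain ⟨w, rfl⟩ := Finset.card_eq_one.mp h1
      rw [cutVal_singleton] at hDval
      have := G.minDegree_le_degree w
      omega
    have h2C : 2 ≤ C.card := key C hC1 hCval
    have h2Cc : 2 ≤ Cᶜ.card := key Cᶜ hC2 (by rw [cutVal_compl]; exact hCval)
    have hmincut : IsMinCut G C :=
      ⟨hC1, hC2, fun D hD1 hD2 => hCval ▸ hlam_lb D hD1 hD2⟩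
    set S : Finset (Finset V) := P.parts.filter (· ⊆ C) with hS
    have hsup : S.sup id = C := by
      apply Finset.Subset.antisymm
      · intro x hx
        obtain ⟨X, hX, hxX⟩ := Finset.mem_sup.mp hx
        exact (Finset.mem_filter.mp hX).2 hxX
      · intro x hx
        obtain ⟨X, hXP, hxX⟩ := P.exists_mem (Finset.mem_univ x)
        have hXC : X ⊆ C := by
          rcases hpres C hmincut h2C h2Cc X hXP with h' | h'
          · exact h'
          · exact absurd (Finset.mem_compl.mp (h' hxX)) (by simp [hx])
        exact Finset.mem_sup.mpr ⟨X, Finset.mem_filter.mpr ⟨hXP, hXC⟩, hxX⟩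
    have hle : lam' ≤ lam := by
      have := hlam'_lb S (Finset.filter_subset _ _)
        (by rw [hsup]; exact hC1) (by rw [hsup]; exact hC2)
      rwa [hsup, hCval] at this
    omega
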